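/- Let μ be a probability measure on ℝ with cdf F and quantile function F^{-1}, with ∫|x| dμ < ∞. Then N·e_N(μ,1) = ∫_ℝ min_{j∈ℕ}|N·F(y) − j| dy, where e_N(μ,1) = W_1(N^{-1}∑_{i=1}^N δ_{F^{-1}((2i−1)/(2N))}, μ) is the minimal Wasserstein-1 distance between μ and an empirical measure on N points. -/

import Mathlib

open MeasureTheory ProbabilityTheory Filter Set
open scoped Topology ENNReal

/-- Distance from `x` to the nearest nonnegative integer. -/
noncomputable def nnd (x : ℝ) : ℝ := ⨅ j : ℕ, |x - (j : ℝ)|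

/-- Left-continuous quantile function of `μ`. -/
noncomputable def qf (μ : Measure ℝ) (u : ℝ) : ℝ := sInf {x : ℝ | u ≤ cdf μ x}

/-- Minimal Wasserstein-`ρ` distance between `μ` and empirical measures on `N` points,
expressed through the quantile formula for the Wasserstein distance on `ℝ`. -/
noncomputable def eN (μ : Measure ℝ) (ρ : ℝ) (N : ℕ) : ℝ :=
  sInf ((fun x : Fin N → ℝ =>
      (∑ i : Fin N,
        ∫ u in Set.Ioc ((i : ℝ) / N) (((i : ℝ) + 1) / N), |x i - qf μ u| ^ ρ) ^ (1 / ρ)) ''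
    {x : Fin N → ℝ | Monotone x})

noncomputable def qf' (μ : Measure ℝ) (u : ℝ) : ℝ :=
  if u ∈ Ioo (0:ℝ) 1 then qf μ u else 0

variable (μ : Measure ℝ) [IsProbabilityMeasure μ]

lemma qf_set_nonempty {u : ℝ} (hu : u < 1) : {x : ℝ | u ≤ cdf μ x}.Nonempty :=
  ((tendsto_cdf_atTop μ).eventually (eventually_ge_nhds hu)).exists

lemma qf_set_bddBelow {u : ℝ} (hu : 0 < u) : BddBelow {x : ℝ | u ≤ cdf μ x} := by
  obtain ⟨x0, hx0⟩ := ((tendsto_cdf_atBot μ).eventually (eventually_lt_nhds hu)).exists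
  refine ⟨x0, fun y hy => ?_⟩
  by_contra hc
  push_neg at hc
  exact absurd (le_trans hy ((monotone_cdf μ) hc.le)) (not_le.2 hx0)

lemma le_cdf_qf {u : ℝ} (hu1 : u < 1) : u ≤ cdf μ (qf μ u) := by
  have hrc : Tendsto (cdf μ) (𝓝[>] (qf μ u)) (𝓝 (cdf μ (qf μ u))) :=
    ((cdf μ).right_continuous (qf μ u)).mono_left (nhdsWithin_mono _ Ioi_subset_Ici_self)
  refine ge_of_tendsto hrc ?_
  filter_upwards [self_mem_nhdsWithin] with x hx
  obtain ⟨s, hs, hsx⟩ := exists_lt_of_csInf_lt (qf_set_nonempty μ hu1) hx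
  exact le_trans hs ((monotone_cdf μ) hsx.le)

lemma qf_le_iff {u : ℝ} (hu0 : 0 < u) (hu1 : u < 1) (y : ℝ) :
    qf μ u ≤ y ↔ u ≤ cdf μ y :=
  ⟨fun h => le_trans (le_cdf_qf μ hu1) ((monotone_cdf μ) h),
   fun h => csInf_le (qf_set_bddBelow μ hu0) h⟩

lemma qf'_le_iff {u : ℝ} (hu : u ∈ Ioo (0:ℝ) 1) (y : ℝ) :
    qf' μ u ≤ y ↔ u ≤ cdf μ y := by
  rw [qf', if_pos hu]; exact qf_le_iff μ hu.1 hu.2 y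

lemma lt_qf'_iff {u : ℝ} (hu : u ∈ Ioo (0:ℝ) 1) (y : ℝ) :
    y < qf' μ u ↔ cdf μ y < u := by
  rw [← not_le, ← not_le, qf'_le_iff μ hu]

lemma qf_monotoneOn : MonotoneOn (qf μ) (Ioo (0:ℝ) 1) := by
  intro a ha b hb hab
  refine le_csInf (qf_set_nonempty μ hb.2) fun x hx => csInf_le (qf_set_bddBelow μ ha.1) ?_
  exact le_trans hab hx

lemma qf'_monotoneOn : MonotoneOn (qf' μ) (Ioo (0:ℝ) 1) := by
  intro a ha b hb hab
  rw [qf', qf', if_pos ha, if_pos hb]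
  exact qf_monotoneOn μ ha hb hab

lemma measurable_qf' : Measurable (qf' μ) := by
  apply measurable_of_Iic
  intro y
  have : qf' μ ⁻¹' Iic y =
      (Ioo (0:ℝ) 1 ∩ Iic (cdf μ y)) ∪ ((Ioo (0:ℝ) 1)ᶜ ∩ {u : ℝ | (0:ℝ) ≤ y}) := by
    ext u
    by_cases hu : u ∈ Ioo (0:ℝ) 1
    · simp only [mem_preimage, mem_Iic, qf', if_pos hu, qf_le_iff μ hu.1 hu.2 y]
      simp [hu]
    · simp [hu, qf']
  rw [this]
  exact (measurableSet_Ioo.inter measurableSet_Iic).union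
    (measurableSet_Ioo.compl.inter (MeasurableSet.const _))

/-- equality a.e. of `qf` and `qf'` on subintervals of `(0,1]`. -/
lemma qf_ae_eq {a b : ℝ} (ha : 0 ≤ a) (hb : b ≤ 1) :
    ∀ᵐ u ∂(volume.restrict (Ioc a b)), qf μ u = qf' μ u := by
  have h1 : ∀ᵐ u : ℝ ∂volume, u ≠ 1 := by
    rw [ae_iff]
    simpa using (Real.volume_singleton (x := 1)).le.antisymm (zero_le _)
  rw [ae_restrict_iff' measurableSet_Ioc]
  filter_upwards [h1] with u hu1 hu
  have : u ∈ Ioo (0:ℝ) 1 := ⟨lt_of_le_of_lt ha hu.1, lt_of_le_of_ne (le_trans hu.2 hb) hu1⟩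
  rw [qf', if_pos this]

lemma ae_ne_one {s : Set ℝ} (hs : MeasurableSet s) :
    ∀ᵐ u ∂(volume.restrict s), u ≠ (1:ℝ) := by
  refine ae_restrict_of_ae ?_
  rw [ae_iff]
  simpa using (Real.volume_singleton (x := 1)).le.antisymm (zero_le _)

/-- The median minimizes the absolute-deviation integral of the (monotone) quantile
function over an interval `(a, b]` with midpoint `m`. -/
lemma median_min {a b : ℝ} (ha : 0 ≤ a) (hb : b ≤ 1) (hab : a < b) (c : ℝ) :
    ∫ u in Ioc a b, |qf' μ ((a+b)/2) - qf' μ u| ≤ ∫ u in Ioc a b, |c - qf' μ u| := by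
  set m : ℝ := (a+b)/2 with hm
  have ham : a < m := by rw [hm]; linarith
  have hmb : m < b := by rw [hm]; linarith
  have hm01 : m ∈ Ioo (0:ℝ) 1 := ⟨lt_of_le_of_lt ha ham, lt_of_lt_of_le hmb hb⟩
  set Q : ℝ → ℝ := qf' μ with hQ
  set d : ℝ := Q m with hd
  set h : ℝ → ℝ := fun u => |c - Q u| - |d - Q u| with hh
  have hmeasQ : Measurable Q := measurable_qf' μ
  have hmeash : Measurable h := by
    apply Measurable.sub <;> exact (measurable_const.sub hmeasQ).abs
  have hbound : ∀ u, |h u| ≤ |c - d| := by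
    intro u
    have := abs_abs_sub_abs_le_abs_sub (c - Q u) (d - Q u)
    simpa [hh] using this
  have hfinIoc : ∀ (x y : ℝ), volume (Ioc x y) ≠ ⊤ := fun x y => by
    simp [Real.volume_Ioc]
  have hintegrable : ∀ {x y : ℝ}, IntegrableOn h (Ioc x y) volume := by
    intro x y
    refine Integrable.mono' (g := fun _ => |c - d|)
      (integrableOn_const (hfinIoc x y))
      (hmeash.aestronglyMeasurable.restrict)
      (ae_of_all _ fun u => by simpa using hbound u)
  have hconst : ∀ {x y : ℝ} (k : ℝ), x ≤ y →
      (∀ᵐ u ∂(volume.restrict (Ioc x y)), k ≤ h u) →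
      k * (y - x) ≤ ∫ u in Ioc x y, h u := by
    intro x y k hxy hae
    have h1 : ∫ (_ : ℝ) in Ioc x y, k = (volume (Ioc x y)).toReal • k := setIntegral_const k
    have h2 : (∫ (_ : ℝ) in Ioc x y, k) ≤ ∫ u in Ioc x y, h u :=
      integral_mono_ae (integrableOn_const (hfinIoc x y)) hintegrable hae
    rw [h1, Real.volume_Ioc, ENNReal.toReal_ofReal (by linarith), smul_eq_mul] at h2
    linarith
  have hkey : 0 ≤ ∫ u in Ioc a b, h u := by
    have hsplit : Ioc a b = Ioc a m ∪ Ioc m b := (Ioc_union_Ioc_eq_Ioc ham.le hmb.le).symm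
    have hdisj : Disjoint (Ioc a m) (Ioc m b) := Ioc_disjoint_Ioc_of_le le_rfl
    rw [hsplit, setIntegral_union hdisj measurableSet_Ioc hintegrable hintegrable]
    rcases le_total d c with hcd | hcd
    · have h1 : (c - d) * (m - a) ≤ ∫ u in Ioc a m, h u := by
        refine hconst _ ham.le ?_
        filter_upwards [ae_restrict_mem measurableSet_Ioc] with u hu
        have hu01 : u ∈ Ioo (0:ℝ) 1 := ⟨lt_of_le_of_lt ha hu.1, lt_of_le_of_lt hu.2 hm01.2⟩
        have hQu : Q u ≤ d := qf'_monotoneOn μ hu01 hm01 hu.2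
        have habs : |d - Q u| = d - Q u := abs_of_nonneg (by linarith)
        have hle : c - Q u ≤ |c - Q u| := le_abs_self _
        rw [hh]; simp only; rw [habs]; linarith
      have h2 : (-(c - d)) * (b - m) ≤ ∫ u in Ioc m b, h u := by
        refine hconst _ hmb.le (ae_of_all _ fun u => ?_)
        have := neg_le_of_abs_le (hbound u)
        rw [abs_of_nonneg (by linarith)] at this
        linarith
      have : m - a = b - m := by rw [hm]; ring
      rw [this] at h1
      linarith
    · have h1 : (d - c) * (b - m) ≤ ∫ u in Ioc m b, h u := by
        refine hconst _ hmb.le ?_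
        filter_upwards [ae_ne_one measurableSet_Ioc, ae_restrict_mem measurableSet_Ioc]
          with u hu1 hu
        have hu01 : u ∈ Ioo (0:ℝ) 1 :=
          ⟨lt_trans hm01.1 hu.1, lt_of_le_of_ne (le_trans hu.2 hb) hu1⟩
        have hQu : d ≤ Q u := qf'_monotoneOn μ hm01 hu01 hu.1.le
        have habs : |d - Q u| = Q u - d := by rw [abs_of_nonpos (by linarith)]; ring
        have hle : Q u - c ≤ |c - Q u| := by rw [abs_sub_comm]; exact le_abs_self _
        rw [hh]; simp only; rw [habs]; linarith
      have h2 : (-(d - c)) * (m - a) ≤ ∫ u in Ioc a m, h u := by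
        refine hconst _ ham.le (ae_of_all _ fun u => ?_)
        have := neg_le_of_abs_le (hbound u)
        rw [abs_of_nonpos (by linarith), neg_sub] at this
        linarith
      have : m - a = b - m := by rw [hm]; ring
      rw [this] at h2
      linarith
  by_cases hI : IntegrableOn (fun u => |d - Q u|) (Ioc a b) volume
  · have : ∫ u in Ioc a b, |c - Q u| = (∫ u in Ioc a b, h u) + ∫ u in Ioc a b, |d - Q u| := by
      rw [← integral_add hintegrable hI]
      congr 1; funext u; rw [hh]; ring
    rw [this]
    linarith
  · have hI2 : ¬ IntegrableOn (fun u => |c - Q u|) (Ioc a b) volume := by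
      intro hc
      apply hI
      have : (fun u => |d - Q u|) = fun u => |c - Q u| - h u := by
        funext u; rw [hh]; ring
      rw [this]
      exact hc.sub hintegrable
    rw [integral_undef hI, integral_undef hI2]

/-- the optimal cost of interval `i`. -/
noncomputable def Acost (μ : Measure ℝ) (N : ℕ) (i : ℕ) : ℝ :=
  ∫ u in Ioc ((i : ℝ) / N) (((i : ℝ) + 1) / N),
    |qf' μ (((i : ℝ) / N + ((i : ℝ) + 1) / N) / 2) - qf' μ u|

section evalEN
variable {N : ℕ}

lemma interval_facts (hN : 1 ≤ N) (i : Fin N) :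
    0 ≤ ((i:ℕ) : ℝ) / N ∧ (((i:ℕ) : ℝ) + 1) / N ≤ 1 ∧ ((i:ℕ) : ℝ) / N < (((i:ℕ) : ℝ) + 1) / N := by
  have hNpos : (0:ℝ) < N := by exact_mod_cast hN
  have hi : ((i:ℕ) : ℝ) + 1 ≤ N := by exact_mod_cast i.2
  refine ⟨by positivity, ?_, ?_⟩
  · rw [div_le_one hNpos]; linarith
  · gcongr <;> linarith

lemma mid_mem (hN : 1 ≤ N) (i : Fin N) :
    (((i:ℕ) : ℝ) / N + (((i:ℕ) : ℝ) + 1) / N) / 2 ∈ Ioo (0:ℝ) 1 := by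
  have hNpos : (0:ℝ) < N := by exact_mod_cast hN
  have hi : ((i:ℕ) : ℝ) + 1 ≤ N := by exact_mod_cast i.2
  constructor
  · positivity
  · have h1 : ((i:ℕ) : ℝ) / N < 1 := by rw [div_lt_one hNpos]; linarith
    have h2 : (((i:ℕ) : ℝ) + 1) / N ≤ 1 := by rw [div_le_one hNpos]; linarith
    linarith

lemma eN_one_eq (μ : Measure ℝ) [IsProbabilityMeasure μ] (hN : 1 ≤ N) :
    eN μ 1 N = ∑ i : Fin N, Acost μ N (i : ℕ) := by
  have hNpos : (0:ℝ) < N := by exact_mod_cast hN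
  unfold eN
  simp only [one_div_one, Real.rpow_one]
  have hterm : ∀ (x : Fin N → ℝ) (i : Fin N),
      (∫ u in Set.Ioc (((i:ℕ) : ℝ) / N) ((((i:ℕ) : ℝ) + 1) / N), |x i - qf μ u|) =
      ∫ u in Set.Ioc (((i:ℕ) : ℝ) / N) ((((i:ℕ) : ℝ) + 1) / N), |x i - qf' μ u| := by
    intro x i
    refine integral_congr_ae ?_
    filter_upwards [qf_ae_eq μ (interval_facts hN i).1 (interval_facts hN i).2.1] with u hu
    rw [hu]
  have hlow : ∀ x : Fin N → ℝ,
      (∑ i : Fin N, Acost μ N (i:ℕ)) ≤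
      ∑ i : Fin N, ∫ u in Set.Ioc (((i:ℕ):ℝ) / N) ((((i:ℕ):ℝ) + 1) / N), |x i - qf μ u| := by
    intro x
    refine Finset.sum_le_sum fun i _ => ?_
    rw [hterm x i]
    exact median_min μ (interval_facts hN i).1 (interval_facts hN i).2.1
      (interval_facts hN i).2.2 (x i)
  set xstar : Fin N → ℝ := fun i => qf' μ ((((i:ℕ):ℝ) / N + (((i:ℕ):ℝ) + 1) / N) / 2) with hxstar
  have hmono : Monotone xstar := by
    intro i j hij
    have hij' : ((i:ℕ) : ℝ) ≤ ((j:ℕ) : ℝ) := by exact_mod_cast hij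
    refine qf'_monotoneOn μ (mid_mem hN i) (mid_mem hN j) ?_
    gcongr <;> exact hNpos.le
  have hval : (∑ i : Fin N, ∫ u in Set.Ioc (((i:ℕ):ℝ) / N) ((((i:ℕ):ℝ) + 1) / N),
      |xstar i - qf μ u|) = ∑ i : Fin N, Acost μ N (i:ℕ) :=
    Finset.sum_congr rfl fun i _ => hterm xstar i
  refine le_antisymm (hval ▸ csInf_le ⟨∑ i : Fin N, Acost μ N (i:ℕ), ?_⟩ ⟨xstar, hmono, rfl⟩)
    (le_csInf ⟨_, xstar, hmono, rfl⟩ ?_)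
  · rintro v ⟨x, _, rfl⟩
    exact hlow x
  · rintro v ⟨x, _, rfl⟩
    exact hlow x

end evalEN

noncomputable def gfun (N i : ℕ) (t : ℝ) : ℝ :=
  if t < (2*(i:ℝ)+1)/(2*N) then t - i/N else ((i:ℝ)+1)/N - t

lemma volume_eq_of_between {A E : Set ℝ} (h1 : E ⊆ A) (h2 : A ⊆ E ∪ {1}) :
    volume A = volume E := by
  refine le_antisymm ((measure_mono h2).trans ((measure_union_le _ _).trans ?_)) (measure_mono h1)
  simp

lemma Acost_lintegral (μ : Measure ℝ) [IsProbabilityMeasure μ] {N : ℕ} (hN : 1 ≤ N) (i : Fin N) :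
    (∫⁻ u in Ioc (((i:ℕ):ℝ)/N) ((((i:ℕ):ℝ)+1)/N),
      ENNReal.ofReal |qf' μ ((((i:ℕ):ℝ)/N + (((i:ℕ):ℝ)+1)/N)/2) - qf' μ u|) =
    ∫⁻ y, ENNReal.ofReal (gfun N (i:ℕ) (cdf μ y)) := by
  obtain ⟨ha0, hb1, hab⟩ := interval_facts hN i
  set a : ℝ := ((i:ℕ):ℝ)/N with hadef
  set b : ℝ := (((i:ℕ):ℝ)+1)/N with hbdef
  set m : ℝ := (a + b)/2 with hmdef
  have hm01 : m ∈ Ioo (0:ℝ) 1 := mid_mem hN i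
  have ham : a < m := by rw [hmdef]; linarith
  have hmb : m < b := by rw [hmdef]; linarith
  have hNpos : (0:ℝ) < N := by exact_mod_cast hN
  have hmgfun : m = (2*((i:ℕ):ℝ)+1)/(2*N) := by
    rw [hmdef, hadef, hbdef]; field_simp; ring
  set Q : ℝ → ℝ := qf' μ with hQdef
  have hmeasQ : Measurable Q := measurable_qf' μ
  set c : ℝ := Q m with hcdef
  set S : Set (ℝ × ℝ) :=
    {p : ℝ × ℝ | (Q p.1 ≤ p.2 ∧ p.2 < c) ∨ (c ≤ p.2 ∧ p.2 < Q p.1)} with hSdef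
  have hSmeas : MeasurableSet S := by
    refine MeasurableSet.union ?_ ?_
    · exact (measurableSet_le (hmeasQ.comp measurable_fst) measurable_snd).inter
        (measurableSet_lt measurable_snd measurable_const)
    · exact (measurableSet_le measurable_const measurable_snd).inter
        (measurableSet_lt measurable_snd (hmeasQ.comp measurable_fst))
  -- step 1 : inner y-integral computes the absolute difference
  have hstep1 : ∀ u : ℝ, (∫⁻ y, S.indicator (fun _ => (1:ℝ≥0∞)) (u, y)) =
      ENNReal.ofReal |c - Q u| := by
    intro u
    have hfun : (fun y => S.indicator (fun _ => (1:ℝ≥0∞)) (u, y)) =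
        ({y : ℝ | (u, y) ∈ S}).indicator (fun _ => (1:ℝ≥0∞)) := by
      funext y
      by_cases hy : (u, y) ∈ S <;> simp [indicator, hy]
    have hUm : MeasurableSet {y : ℝ | (u, y) ∈ S} := hSmeas.preimage (measurable_prodMk_left)
    rw [hfun, lintegral_indicator hUm]
    simp only [lintegral_const, Measure.restrict_apply MeasurableSet.univ, univ_inter, one_mul]
    rcases le_total (Q u) c with hqc | hqc
    · have : {y : ℝ | (u, y) ∈ S} = Ico (Q u) c := by
        ext y
        simp only [hSdef, mem_setOf_eq, mem_Ico]
        constructor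
        · rintro (⟨h1, h2⟩ | ⟨h1, h2⟩)
          · exact ⟨h1, h2⟩
          · exact absurd (lt_of_le_of_lt h1 h2) (not_lt.2 hqc)
        · exact fun h => Or.inl h
      rw [this, Real.volume_Ico, abs_of_nonneg (by linarith)]
    · have : {y : ℝ | (u, y) ∈ S} = Ico c (Q u) := by
        ext y
        simp only [hSdef, mem_setOf_eq, mem_Ico]
        constructor
        · rintro (⟨h1, h2⟩ | ⟨h1, h2⟩)
          · exact absurd (lt_of_le_of_lt h1 h2) (not_lt.2 hqc)
          · exact ⟨h1, h2⟩
        · exact fun h => Or.inr h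
      rw [this, Real.volume_Ico, abs_of_nonpos (by linarith), neg_sub]
  -- step 2 : inner u-integral computes gfun
  have hstep2 : ∀ y : ℝ, (∫⁻ u in Ioc a b, S.indicator (fun _ => (1:ℝ≥0∞)) (u, y)) =
      ENNReal.ofReal (gfun N (i:ℕ) (cdf μ y)) := by
    intro y
    set t : ℝ := cdf μ y with htdef
    have ht0 : 0 ≤ t := cdf_nonneg μ y
    have ht1 : t ≤ 1 := cdf_le_one μ y
    set U : Set ℝ := {u : ℝ | (u, y) ∈ S} with hUdef
    have hUm : MeasurableSet U := hSmeas.preimage (measurable_prodMk_right)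
    have hfun : (fun u => S.indicator (fun _ => (1:ℝ≥0∞)) (u, y)) =
        U.indicator (fun _ => (1:ℝ≥0∞)) := by
      funext u
      by_cases hu : (u, y) ∈ S <;> simp [hUdef, indicator, hu]
    rw [hfun, lintegral_indicator hUm, setLIntegral_one, Measure.restrict_apply hUm]
    -- membership characterization on Ioo 0 1
    have hmem : ∀ u ∈ Ioo (0:ℝ) 1, (u ∈ U ↔ ((u ≤ t ∧ t < m) ∨ (m ≤ t ∧ t < u))) := by
      intro u hu
      have h1 : Q u ≤ y ↔ u ≤ t := qf'_le_iff μ hu y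
      have h2 : y < Q u ↔ t < u := lt_qf'_iff μ hu y
      have h3 : c ≤ y ↔ m ≤ t := qf'_le_iff μ hm01 y
      have h4 : y < c ↔ t < m := lt_qf'_iff μ hm01 y
      simp only [hUdef, hSdef, mem_setOf_eq]
      rw [h1, h2, h3, h4]
    have hone : ∀ u, u ∈ U ∩ Ioc a b → u ∉ Ioo (0:ℝ) 1 → u = 1 := by
      intro u ⟨_, hu2⟩ h01
      have hpos : 0 < u := lt_of_le_of_lt ha0 hu2.1
      have hle : u ≤ 1 := le_trans hu2.2 hb1
      by_contra hc
      exact h01 ⟨hpos, lt_of_le_of_ne hle hc⟩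
    rcases lt_or_ge t m with htm | htm
    · -- set is Ioc a t up to the point 1
      have hvol : volume (U ∩ Ioc a b) = volume (Ioc a t) := by
        refine volume_eq_of_between ?_ ?_
        · intro u hu
          have h01 : u ∈ Ioo (0:ℝ) 1 := ⟨lt_of_le_of_lt ha0 hu.1,
            lt_of_le_of_lt hu.2 (lt_of_lt_of_le htm hm01.2.le)⟩
          exact ⟨(hmem u h01).2 (Or.inl ⟨hu.2, htm⟩),
            hu.1, le_trans hu.2 (by linarith)⟩
        · intro u hu
          by_cases h01 : u ∈ Ioo (0:ℝ) 1
          · left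
            rcases (hmem u h01).1 hu.1 with ⟨h1, _⟩ | ⟨h1, _⟩
            · exact ⟨hu.2.1, h1⟩
            · exact absurd (lt_of_le_of_lt h1 htm) (lt_irrefl m)
          · exact Or.inr (by simp [hone u hu h01])
      rw [hvol, Real.volume_Ioc, gfun, if_pos (by rw [← hmgfun]; exact htm)]
    · have hvol : volume (U ∩ Ioc a b) = ENNReal.ofReal (b - t) := by
        refine le_antisymm ?_ ?_
        · have hsub : U ∩ Ioc a b ⊆ Ioc t b ∪ {1} := by
            intro u hu
            by_cases h01 : u ∈ Ioo (0:ℝ) 1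
            · left
              rcases (hmem u h01).1 hu.1 with ⟨h1, h2⟩ | ⟨_, h2⟩
              · exact absurd (lt_of_le_of_lt htm h2) (lt_irrefl m)
              · exact ⟨h2, hu.2.2⟩
            · exact Or.inr (by simp [hone u hu h01])
          calc volume (U ∩ Ioc a b) ≤ volume (Ioc t b ∪ {1}) := measure_mono hsub
            _ ≤ volume (Ioc t b) + volume ({1} : Set ℝ) := measure_union_le _ _
            _ = ENNReal.ofReal (b - t) := by simp [Real.volume_Ioc]
        · have hsub : Ioo t b ⊆ U ∩ Ioc a b := by
            intro u hu
            have h01 : u ∈ Ioo (0:ℝ) 1 := ⟨lt_trans (lt_of_lt_of_le hm01.1 htm) hu.1,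
              lt_of_lt_of_le hu.2 hb1⟩
            exact ⟨(hmem u h01).2 (Or.inr ⟨htm, hu.1⟩),
              lt_trans (lt_of_lt_of_le ham htm) hu.1, hu.2.le⟩
          calc ENNReal.ofReal (b - t) = volume (Ioo t b) := (Real.volume_Ioo).symm
            _ ≤ volume (U ∩ Ioc a b) := measure_mono hsub
      rw [hvol, gfun, if_neg (by rw [← hmgfun]; exact not_lt.2 htm)]
  -- assemble via Tonelli
  calc (∫⁻ u in Ioc a b, ENNReal.ofReal |c - Q u|)
      = ∫⁻ u in Ioc a b, ∫⁻ y, S.indicator (fun _ => (1:ℝ≥0∞)) (u, y) := by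
        refine lintegral_congr fun u => (hstep1 u).symm
    _ = ∫⁻ y, ∫⁻ u in Ioc a b, S.indicator (fun _ => (1:ℝ≥0∞)) (u, y) := by
        exact lintegral_lintegral_swap ((measurable_const.indicator hSmeas).aemeasurable)
    _ = ∫⁻ y, ENNReal.ofReal (gfun N (i:ℕ) (cdf μ y)) := lintegral_congr fun y => hstep2 y

lemma nnd_nonneg (x : ℝ) : 0 ≤ nnd x :=
  le_ciInf fun j => abs_nonneg _

lemma nnd_eq (k : ℕ) (x : ℝ) (h1 : (k : ℝ) ≤ x) (h2 : x ≤ (k : ℝ) + 1) :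
    nnd x = min (x - k) ((k : ℝ) + 1 - x) := by
  have hbdd : BddBelow (range fun j : ℕ => |x - (j : ℝ)|) :=
    ⟨0, fun y ⟨j, hj⟩ => hj ▸ abs_nonneg _⟩
  refine le_antisymm (le_min ?_ ?_) (le_ciInf fun j => ?_)
  · calc nnd x ≤ |x - (k : ℝ)| := ciInf_le hbdd k
      _ = x - k := by rw [abs_of_nonneg (by linarith)]
  · calc nnd x ≤ |x - ((k+1 : ℕ) : ℝ)| := ciInf_le hbdd (k+1)
      _ = (k : ℝ) + 1 - x := by push_cast; rw [abs_of_nonpos (by linarith)]; ring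
  · rcases le_or_gt (j : ℕ) k with hj | hj
    · have : (j : ℝ) ≤ k := by exact_mod_cast hj
      calc min (x - k) ((k:ℝ)+1 - x) ≤ x - k := min_le_left _ _
        _ ≤ x - j := by linarith
        _ ≤ |x - j| := le_abs_self _
    · have : (k : ℝ) + 1 ≤ j := by exact_mod_cast hj
      calc min (x - k) ((k:ℝ)+1 - x) ≤ (k:ℝ)+1 - x := min_le_right _ _
        _ ≤ (j : ℝ) - x := by linarith
        _ ≤ |x - j| := by rw [abs_sub_comm]; exact le_abs_self _



lemma gfun_nonpos_lt (N i k : ℕ) (t : ℝ) (hNpos : (0:ℝ) < N) (hik : i + 1 ≤ k)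
    (htl : (k:ℝ)/N ≤ t) : gfun N i t ≤ 0 := by
  have hik' : ((i:ℝ)) + 1 ≤ k := by exact_mod_cast hik
  have hmi : (2*(i:ℝ)+1)/(2*N) ≤ t := by
    rw [div_le_iff₀ (by positivity)]
    rw [div_le_iff₀ hNpos] at htl; nlinarith
  rw [gfun, if_neg (not_lt.2 hmi), sub_nonpos, div_le_iff₀ hNpos]
  rw [div_le_iff₀ hNpos] at htl; nlinarith

lemma gfun_nonpos_gt (N i k : ℕ) (t : ℝ) (hNpos : (0:ℝ) < N) (hik : k + 1 ≤ i)
    (htr : t ≤ ((k:ℝ)+1)/N) : gfun N i t ≤ 0 := by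
  have hik' : ((k:ℝ)) + 1 ≤ i := by exact_mod_cast hik
  have hti : t ≤ (i:ℝ)/N := le_trans htr (by gcongr)
  have hmi : t < (2*(i:ℝ)+1)/(2*N) := by
    rw [lt_div_iff₀ (by positivity)]
    rw [le_div_iff₀ hNpos] at hti; nlinarith
  rw [gfun, if_pos hmi, sub_nonpos, le_div_iff₀ hNpos]
  rw [le_div_iff₀ hNpos] at hti; nlinarith

lemma gfun_sum (N : ℕ) (hN : 1 ≤ N) {t : ℝ} (ht0 : 0 ≤ t) (ht1 : t ≤ 1) :
    ∑ i : Fin N, max 0 (gfun N i t) = nnd (N * t) / N := by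
  have hNpos : (0:ℝ) < N := by exact_mod_cast hN
  set k : ℕ := min (N-1) ⌊(N:ℝ)*t⌋₊ with hk
  have hkN : k < N := lt_of_le_of_lt (min_le_left _ _) (by omega)
  have hk1 : (k:ℝ) ≤ N*t := by
    rcases le_or_gt (⌊(N:ℝ)*t⌋₊) (N-1) with h | h
    · have : k = ⌊(N:ℝ)*t⌋₊ := by omega
      rw [this]; exact Nat.floor_le (by positivity)
    · have hk' : k = N - 1 := by omega
      have : ((N:ℝ) - 1) ≤ N * t := by
        have h1 : (N:ℝ) ≤ ⌊(N:ℝ)*t⌋₊ := by exact_mod_cast Nat.le_of_lt_succ (by omega)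
        have := Nat.floor_le (show (0:ℝ) ≤ (N:ℝ)*t by positivity)
        linarith
      rw [hk']; push_cast [Nat.cast_sub hN]; linarith
  have hk2 : N*t ≤ (k:ℝ) + 1 := by
    rcases le_or_gt (⌊(N:ℝ)*t⌋₊) (N-1) with h | h
    · have : k = ⌊(N:ℝ)*t⌋₊ := by omega
      rw [this]; exact le_of_lt (Nat.lt_floor_add_one _)
    · have hk' : k = N - 1 := by omega
      have hNt : (N:ℝ)*t ≤ N := by nlinarith
      rw [hk']; push_cast [Nat.cast_sub hN]; linarith
  have htl : (k:ℝ)/N ≤ t := by rw [div_le_iff₀ hNpos]; linarith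
  have htr : t ≤ ((k:ℝ)+1)/N := by rw [le_div_iff₀ hNpos]; linarith
  have hsum : ∑ i : Fin N, max 0 (gfun N i t) = max 0 (gfun N k t) := by
    rw [Finset.sum_eq_single_of_mem (⟨k, hkN⟩ : Fin N) (Finset.mem_univ _)]
    intro i _ hi
    have hne : (i : ℕ) ≠ k := fun h => hi (by ext; simpa using h)
    rcases lt_or_gt_of_ne hne with hik | hik
    · exact max_eq_left (gfun_nonpos_lt N i k t hNpos (by omega) htl)
    · exact max_eq_left (gfun_nonpos_gt N i k t hNpos (by omega) htr)
  rw [hsum, nnd_eq k (N*t) hk1 hk2]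
  rcases lt_or_ge t ((2*(k:ℝ)+1)/(2*N)) with hcase | hcase
  · rw [gfun, if_pos hcase, max_eq_right (sub_nonneg.2 htl),
      min_eq_left (by
        rw [lt_div_iff₀ (by positivity : (0:ℝ) < 2*N)] at hcase
        linarith)]
    field_simp
  · rw [gfun, if_neg (not_lt.2 hcase), max_eq_right (sub_nonneg.2 htr),
      min_eq_right (by
        rw [div_le_iff₀ (by positivity : (0:ℝ) < 2*N)] at hcase
        linarith)]
    field_simp

lemma ofReal_max_zero (x : ℝ) : ENNReal.ofReal (max 0 x) = ENNReal.ofReal x := by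
  rcases le_total x 0 with h | h
  · rw [max_eq_left h, ENNReal.ofReal_zero, eq_comm, ENNReal.ofReal_eq_zero]
    exact h
  · rw [max_eq_right h]

lemma measurable_gfun (N i : ℕ) : Measurable (gfun N i) := by
  unfold gfun
  exact Measurable.ite (measurableSet_lt measurable_id measurable_const)
    (measurable_id.sub measurable_const) (measurable_const.sub measurable_id)

section finiteness
variable (μ : Measure ℝ) [IsProbabilityMeasure μ]

lemma swap_bound_neg :
    (∫⁻ y in Iio (0:ℝ), μ (Iic y)) ≤ ∫⁻ x, ENNReal.ofReal |x| ∂μ := by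
  have hSm : MeasurableSet {p : ℝ × ℝ | p.2 ≤ p.1} :=
    measurableSet_le measurable_snd measurable_fst
  have h1 : ∀ y : ℝ, μ (Iic y) = ∫⁻ x, {p : ℝ × ℝ | p.2 ≤ p.1}.indicator
      (fun _ => (1:ℝ≥0∞)) (y, x) ∂μ := by
    intro y
    have : (fun x => {p : ℝ × ℝ | p.2 ≤ p.1}.indicator (fun _ => (1:ℝ≥0∞)) (y, x)) =
        (Iic y).indicator (fun _ => (1:ℝ≥0∞)) := by
      funext x
      by_cases h : x ≤ y <;> simp [indicator, h]
    rw [this, lintegral_indicator measurableSet_Iic, setLIntegral_one]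
  calc (∫⁻ y in Iio (0:ℝ), μ (Iic y))
      = ∫⁻ y in Iio (0:ℝ), ∫⁻ x, {p : ℝ × ℝ | p.2 ≤ p.1}.indicator
          (fun _ => (1:ℝ≥0∞)) (y, x) ∂μ := lintegral_congr fun y => h1 y
    _ = ∫⁻ x, ∫⁻ y in Iio (0:ℝ), {p : ℝ × ℝ | p.2 ≤ p.1}.indicator
          (fun _ => (1:ℝ≥0∞)) (y, x) ∂volume ∂μ :=
        lintegral_lintegral_swap ((measurable_const.indicator hSm).aemeasurable)
    _ ≤ ∫⁻ x, ENNReal.ofReal |x| ∂μ := by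
        refine lintegral_mono fun x => ?_
        have : (fun y => {p : ℝ × ℝ | p.2 ≤ p.1}.indicator (fun _ => (1:ℝ≥0∞)) (y, x)) =
            (Ici x).indicator (fun _ => (1:ℝ≥0∞)) := by
          funext y
          by_cases h : x ≤ y <;> simp [indicator, h]
        rw [this, lintegral_indicator measurableSet_Ici, setLIntegral_one,
          Measure.restrict_apply measurableSet_Ici]
        have : Ici x ∩ Iio 0 = Ico x 0 := by ext z; simp [mem_Ico, and_comm]
        rw [this, Real.volume_Ico]
        exact ENNReal.ofReal_le_ofReal (by simp [abs_nonneg]; linarith [neg_abs_le x])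
  
lemma swap_bound_pos :
    (∫⁻ y in Ici (0:ℝ), μ (Ioi y)) ≤ ∫⁻ x, ENNReal.ofReal |x| ∂μ := by
  have hSm : MeasurableSet {p : ℝ × ℝ | p.1 < p.2} :=
    measurableSet_lt measurable_fst measurable_snd
  have h1 : ∀ y : ℝ, μ (Ioi y) = ∫⁻ x, {p : ℝ × ℝ | p.1 < p.2}.indicator
      (fun _ => (1:ℝ≥0∞)) (y, x) ∂μ := by
    intro y
    have : (fun x => {p : ℝ × ℝ | p.1 < p.2}.indicator (fun _ => (1:ℝ≥0∞)) (y, x)) =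
        (Ioi y).indicator (fun _ => (1:ℝ≥0∞)) := by
      funext x
      by_cases h : y < x <;> simp [indicator, h]
    rw [this, lintegral_indicator measurableSet_Ioi, setLIntegral_one]
  calc (∫⁻ y in Ici (0:ℝ), μ (Ioi y))
      = ∫⁻ y in Ici (0:ℝ), ∫⁻ x, {p : ℝ × ℝ | p.1 < p.2}.indicator
          (fun _ => (1:ℝ≥0∞)) (y, x) ∂μ := lintegral_congr fun y => h1 y
    _ = ∫⁻ x, ∫⁻ y in Ici (0:ℝ), {p : ℝ × ℝ | p.1 < p.2}.indicator
          (fun _ => (1:ℝ≥0∞)) (y, x) ∂volume ∂μ :=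
        lintegral_lintegral_swap ((measurable_const.indicator hSm).aemeasurable)
    _ ≤ ∫⁻ x, ENNReal.ofReal |x| ∂μ := by
        refine lintegral_mono fun x => ?_
        have : (fun y => {p : ℝ × ℝ | p.1 < p.2}.indicator (fun _ => (1:ℝ≥0∞)) (y, x)) =
            (Iio x).indicator (fun _ => (1:ℝ≥0∞)) := by
          funext y
          by_cases h : y < x <;> simp [indicator, h]
        rw [this, lintegral_indicator measurableSet_Iio, setLIntegral_one,
          Measure.restrict_apply measurableSet_Iio]
        have : Iio x ∩ Ici 0 = Ico 0 x := by ext z; simp [mem_Ico, and_comm]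
        rw [this, Real.volume_Ico]
        exact ENNReal.ofReal_le_ofReal (by simp [abs_nonneg]; linarith [le_abs_self x])

end finiteness

lemma nnd_le (x : ℝ) (j : ℕ) : nnd x ≤ |x - j| :=
  ciInf_le ⟨0, fun y ⟨j, hj⟩ => hj ▸ abs_nonneg _⟩ j

lemma ofReal_one_sub_cdf (μ : Measure ℝ) [IsProbabilityMeasure μ] (y : ℝ) :
    ENNReal.ofReal (1 - cdf μ y) = μ (Ioi y) := by
  have h1 : μ (Ioi y) = μ univ - μ (Iic y) := by
    rw [← compl_Iic]
    exact measure_compl measurableSet_Iic (measure_ne_top μ _)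
  rw [h1, measure_univ, ← ofReal_cdf μ y, ← ENNReal.ofReal_one,
    ← ENNReal.ofReal_sub _ (cdf_nonneg μ y)]

lemma K_fin (μ : Measure ℝ) [IsProbabilityMeasure μ]
    (hmom : Integrable (fun x : ℝ => |x|) μ) (N : ℕ) :
    ∫⁻ y, ENNReal.ofReal (nnd ((N:ℝ) * cdf μ y)) < ⊤ := by
  have hmoml : ∫⁻ x, ENNReal.ofReal |x| ∂μ < ⊤ := by
    have h := hmom.hasFiniteIntegral
    rw [HasFiniteIntegral] at h
    refine lt_of_le_of_lt (lintegral_mono fun x => ?_) h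
    rw [← ofReal_norm (|x|)]
    simp
  have hb1 : (∫⁻ y in Iio (0:ℝ), ENNReal.ofReal (nnd ((N:ℝ) * cdf μ y))) ≤
      (N : ℝ≥0∞) * ∫⁻ y in Iio (0:ℝ), μ (Iic y) := by
    rw [← lintegral_const_mul' _ _ (by simp : (N : ℝ≥0∞) ≠ ⊤)]
    refine lintegral_mono fun y => ?_
    have h1 : nnd ((N:ℝ) * cdf μ y) ≤ (N:ℝ) * cdf μ y := by
      have := nnd_le ((N:ℝ) * cdf μ y) 0
      rwa [Nat.cast_zero, sub_zero, abs_of_nonneg (mul_nonneg (Nat.cast_nonneg N) (cdf_nonneg μ y))] at this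
    calc ENNReal.ofReal (nnd ((N:ℝ) * cdf μ y)) ≤ ENNReal.ofReal ((N:ℝ) * cdf μ y) :=
          ENNReal.ofReal_le_ofReal h1
      _ = (N : ℝ≥0∞) * μ (Iic y) := by
          rw [ENNReal.ofReal_mul (by positivity), ENNReal.ofReal_natCast, ofReal_cdf]
  have hb2 : (∫⁻ y in Ici (0:ℝ), ENNReal.ofReal (nnd ((N:ℝ) * cdf μ y))) ≤
      (N : ℝ≥0∞) * ∫⁻ y in Ici (0:ℝ), μ (Ioi y) := by
    rw [← lintegral_const_mul' _ _ (by simp : (N : ℝ≥0∞) ≠ ⊤)]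
    refine lintegral_mono fun y => ?_
    have h1 : nnd ((N:ℝ) * cdf μ y) ≤ (N:ℝ) * (1 - cdf μ y) := by
      have h := nnd_le ((N:ℝ) * cdf μ y) N
      have hle : (N:ℝ) * cdf μ y - N ≤ 0 := by
        have := cdf_le_one μ y
        nlinarith [Nat.cast_nonneg (α := ℝ) N]
      rw [abs_of_nonpos hle] at h
      calc nnd ((N:ℝ) * cdf μ y) ≤ -((N:ℝ) * cdf μ y - N) := h
        _ = (N:ℝ) * (1 - cdf μ y) := by ring
    calc ENNReal.ofReal (nnd ((N:ℝ) * cdf μ y)) ≤ ENNReal.ofReal ((N:ℝ) * (1 - cdf μ y)) :=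
          ENNReal.ofReal_le_ofReal h1
      _ = (N : ℝ≥0∞) * μ (Ioi y) := by
          rw [ENNReal.ofReal_mul (by positivity), ENNReal.ofReal_natCast,
            ofReal_one_sub_cdf]
  have hsplit : (∫⁻ y, ENNReal.ofReal (nnd ((N:ℝ) * cdf μ y))) =
      (∫⁻ y in Iio (0:ℝ), ENNReal.ofReal (nnd ((N:ℝ) * cdf μ y))) +
      ∫⁻ y in Ici (0:ℝ), ENNReal.ofReal (nnd ((N:ℝ) * cdf μ y)) := by
    have := (lintegral_add_compl (μ := volume)
      (fun y => ENNReal.ofReal (nnd ((N:ℝ) * cdf μ y)))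
      (measurableSet_Iio (a := (0:ℝ)))).symm
    rwa [compl_Iio] at this
  rw [hsplit]
  have e1 := le_trans hb1 (mul_le_mul_right (swap_bound_neg μ) _)
  have e2 := le_trans hb2 (mul_le_mul_right (swap_bound_pos μ) _)
  have hfin : (N : ℝ≥0∞) * (∫⁻ x, ENNReal.ofReal |x| ∂μ) < ⊤ :=
    ENNReal.mul_lt_top (by simp) hmoml
  exact ENNReal.add_lt_top.2 ⟨lt_of_le_of_lt e1 hfin, lt_of_le_of_lt e2 hfin⟩

theorem stmt14 (μ : Measure ℝ) [IsProbabilityMeasure μ]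
    (hmom : Integrable (fun x : ℝ => |x|) μ) (N : ℕ) (hN : 1 ≤ N) :
    (N : ℝ) * eN μ 1 N = ∫ y : ℝ, nnd ((N : ℝ) * cdf μ y) := by
  have hNpos : (0:ℝ) < N := by exact_mod_cast hN
  have hFmeas : Measurable (cdf μ) := (monotone_cdf μ).measurable
  have hgmeas : ∀ i : Fin N, Measurable fun y => ENNReal.ofReal (gfun N (i:ℕ) (cdf μ y)) :=
    fun i => ENNReal.measurable_ofReal.comp ((measurable_gfun N (i:ℕ)).comp hFmeas)
  -- each Acost as a lower integral
  have hAc : ∀ i : Fin N, Acost μ N (i:ℕ) =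
      (∫⁻ y, ENNReal.ofReal (gfun N (i:ℕ) (cdf μ y))).toReal := by
    intro i
    rw [Acost, integral_eq_lintegral_of_nonneg_ae (f := fun u => |qf' μ ((((i:ℕ):ℝ)/N + (((i:ℕ):ℝ)+1)/N)/2) - qf' μ u|) (ae_of_all _ fun u => abs_nonneg _)
      ((measurable_const.sub (measurable_qf' μ)).abs.aestronglyMeasurable)]
    congr 1
    exact Acost_lintegral μ hN i
  -- pointwise identity
  have hpt : ∀ y, ENNReal.ofReal (nnd ((N:ℝ) * cdf μ y)) =
      (N:ℝ≥0∞) * ∑ i : Fin N, ENNReal.ofReal (gfun N (i:ℕ) (cdf μ y)) := by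
    intro y
    have hg := gfun_sum N hN (cdf_nonneg μ y) (cdf_le_one μ y)
    have hid : nnd ((N:ℝ) * cdf μ y) = (N:ℝ) * ∑ i : Fin N, max 0 (gfun N (i:ℕ) (cdf μ y)) := by
      rw [hg]; field_simp
    rw [hid, ENNReal.ofReal_mul (Nat.cast_nonneg N), ENNReal.ofReal_natCast,
      ENNReal.ofReal_sum_of_nonneg (fun i _ => le_max_left 0 _)]
    congr 1
    exact Finset.sum_congr rfl fun i _ => ofReal_max_zero _
  have hK : (∫⁻ y, ENNReal.ofReal (nnd ((N:ℝ) * cdf μ y))) =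
      (N:ℝ≥0∞) * ∑ i : Fin N, ∫⁻ y, ENNReal.ofReal (gfun N (i:ℕ) (cdf μ y)) := by
    rw [lintegral_congr hpt, lintegral_const_mul' _ _ (by simp : (N:ℝ≥0∞) ≠ ⊤),
      lintegral_finset_sum _ (fun i _ => hgmeas i)]
  have hKfin := K_fin μ hmom N
  have hLfin : ∀ i ∈ Finset.univ (α := Fin N),
      (∫⁻ y, ENNReal.ofReal (gfun N (i:ℕ) (cdf μ y))) ≠ ⊤ := by
    rw [hK] at hKfin
    have hN0 : (N:ℝ≥0∞) ≠ 0 := by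
      simp only [ne_eq, Nat.cast_eq_zero]
      omega
    have hsumfin : (∑ i : Fin N, ∫⁻ y, ENNReal.ofReal (gfun N (i:ℕ) (cdf μ y))) ≠ ⊤ := by
      intro htop
      rw [htop, ENNReal.mul_top hN0] at hKfin
      exact absurd hKfin (lt_irrefl ⊤)
    intro i _
    exact (ENNReal.sum_lt_top.1 hsumfin.lt_top i (Finset.mem_univ i)).ne
  -- the RHS
  have hRHS : (∫ y : ℝ, nnd ((N : ℝ) * cdf μ y)) =
      (∫⁻ y, ENNReal.ofReal (nnd ((N:ℝ) * cdf μ y))).toReal := by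
    have hmeas : Measurable fun y => nnd ((N:ℝ) * cdf μ y) := by
      have hfun : (fun y => nnd ((N:ℝ) * cdf μ y)) =
          fun y => (N:ℝ) * ∑ i : Fin N, max 0 (gfun N (i:ℕ) (cdf μ y)) := by
        funext y
        rw [gfun_sum N hN (cdf_nonneg μ y) (cdf_le_one μ y)]
        field_simp
      rw [hfun]
      exact measurable_const.mul (Finset.measurable_sum _
        (fun i _ => measurable_const.max ((measurable_gfun N (i:ℕ)).comp hFmeas)))
    exact integral_eq_lintegral_of_nonneg_ae (ae_of_all _ fun y => nnd_nonneg _)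
      hmeas.aestronglyMeasurable
  rw [hRHS, hK, ENNReal.toReal_mul, ENNReal.toReal_natCast,
    ENNReal.toReal_sum hLfin, eN_one_eq μ hN]
  congr 1
  exact Finset.sum_congr rfl fun i _ => hAc i
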